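/- For every f ∈ C_b(Ω;ℂ): sup_{t>0} t^{−α} sup_{x∈Ω} |e^{t q(x)} f(x) − f(x)| < ∞ if and only if sup_{x∈Ω} |q(x)|^α |f(x)| < ∞. (Thus the Favard space F_α of the multiplication semigroup is {f ∈ C_b(Ω;ℂ) : |q|^α f is bounded}.) -/

import Mathlib

open scoped Topology BoundedContinuousFunction

lemma aux_eps15 : ∃ ε > (0:ℝ), ∀ w : ℂ, ‖w‖ = 1 → w.re ≤ 0 → ε ≤ ‖Complex.exp w - 1‖ := by
  set K : Set ℂ := Metric.sphere 0 1 ∩ {w | w.re ≤ 0} with hKdef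
  have hKc : IsCompact K :=
    (isCompact_sphere 0 1).inter_right (isClosed_le Complex.continuous_re continuous_const)
  have hne : K.Nonempty := ⟨-1, by simp [hKdef]⟩
  have hcont : ContinuousOn (fun w : ℂ => ‖Complex.exp w - 1‖) K :=
    ((Complex.continuous_exp.sub continuous_const).norm).continuousOn
  obtain ⟨w₀, hw₀K, hmin⟩ := hKc.exists_isMinOn hne hcont
  refine ⟨‖Complex.exp w₀ - 1‖, ?_, ?_⟩
  · have hne1 : Complex.exp w₀ ≠ 1 := by
      intro h
      obtain ⟨n, hn⟩ := Complex.exp_eq_one_iff.mp h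
      have hnorm : ‖w₀‖ = 1 := by
        have := hw₀K.1
        simpa [mem_sphere_zero_iff_norm] using this
      rw [hn] at hnorm
      have hval : ‖(n : ℂ) * (2 * (Real.pi:ℂ) * Complex.I)‖ = |(n:ℝ)| * (2 * Real.pi) := by
        simp [norm_mul, abs_of_pos Real.pi_pos, Complex.norm_intCast]
      rcases eq_or_ne n 0 with h0 | h0
      · subst h0; simp at hnorm
      · have habs : (1:ℝ) ≤ |(n:ℝ)| := by
          rw [← Int.cast_abs]
          exact_mod_cast Int.one_le_abs h0
        have hpi := Real.pi_gt_three
        rw [hval] at hnorm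
        nlinarith
    have : Complex.exp w₀ - 1 ≠ 0 := sub_ne_zero.mpr hne1
    exact norm_pos_iff.mpr this
  · intro w hw hre
    exact hmin (by simp [hKdef, mem_sphere_zero_iff_norm, hw, hre])

lemma aux_min15 (s : ℝ) (hs : 0 ≤ s) {α : ℝ} (h0 : 0 < α) (h1 : α ≤ 1) :
    min 1 s ≤ s ^ α := by
  rcases eq_or_lt_of_le hs with h | hpos
  · simp [← h, Real.zero_rpow h0.ne']
  rcases le_total s 1 with h | h
  · calc min 1 s ≤ s := min_le_right _ _
      _ = s ^ (1:ℝ) := (Real.rpow_one s).symm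
      _ ≤ s ^ α := Real.rpow_le_rpow_of_exponent_ge hpos h h1
  · calc min 1 s ≤ 1 := min_le_left _ _
      _ ≤ s ^ α := Real.one_le_rpow h h0.le

/-- For `f ∈ C_b(Ω;ℂ)`:
`sup_{t>0} t^{−α} sup_{x∈Ω} |e^{t q(x)} f(x) − f(x)| < ∞` iff
`sup_{x∈Ω} |q(x)|^α |f(x)| < ∞`. -/
theorem statement15
    {Ω : Type*} [TopologicalSpace Ω]
    (q : Ω → ℂ) (hq : Continuous q)
    (ω : ℝ) (hω : ω < 0) (hqre : ∀ x : Ω, (q x).re ≤ ω)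
    (α : ℝ) (hα : α ∈ Set.Ioo (0:ℝ) 1)
    (f : Ω →ᵇ ℂ) :
    (∃ C : ℝ, ∀ t > (0:ℝ), ∀ x : Ω,
        ‖Complex.exp ((t : ℂ) * q x) * f x - f x‖ / t ^ α ≤ C) ↔
    (∃ C : ℝ, ∀ x : Ω, ‖q x‖ ^ α * ‖f x‖ ≤ C) := by
  obtain ⟨hα0, hα1⟩ := hα
  constructor
  · rintro ⟨C, hC⟩
    obtain ⟨ε, hε, hεle⟩ := aux_eps15
    refine ⟨C / ε, fun x => ?_⟩
    set z := q x with hz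
    have hzre : z.re ≤ ω := hqre x
    have hznorm : 0 < ‖z‖ := by
      have : -z.re ≤ ‖z‖ := by
        calc -z.re = (-z).re := by simp
          _ ≤ ‖-z‖ := Complex.re_le_norm _
          _ = ‖z‖ := norm_neg z
      linarith
    set t : ℝ := 1 / ‖z‖ with ht
    have htpos : 0 < t := by positivity
    have h1 : t * ‖z‖ = 1 := by
      rw [ht]; exact one_div_mul_cancel (ne_of_gt hznorm)
    have hw : ‖(t:ℂ) * z‖ = 1 := by
      rw [norm_mul, Complex.norm_real, Real.norm_eq_abs, abs_of_pos htpos]; exact h1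
    have hwre : ((t:ℂ) * z).re ≤ 0 := by
      have : ((t:ℂ) * z).re = t * z.re := by simp [Complex.mul_re]
      rw [this]
      nlinarith
    have key := hC t htpos x
    rw [div_le_iff₀ (Real.rpow_pos_of_pos htpos α)] at key
    have hεf : ε * ‖f x‖ ≤ ‖Complex.exp ((t:ℂ) * z) * f x - f x‖ := by
      have : Complex.exp ((t:ℂ) * z) * f x - f x = (Complex.exp ((t:ℂ) * z) - 1) * f x := by ring
      rw [this, norm_mul]
      exact mul_le_mul_of_nonneg_right (hεle _ hw hwre) (norm_nonneg _)
    have htα : t ^ α * ‖z‖ ^ α = 1 := by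
      rw [← Real.mul_rpow htpos.le (norm_nonneg z), h1, Real.one_rpow]
    rw [le_div_iff₀ hε]
    calc ‖z‖ ^ α * ‖f x‖ * ε ≤ ‖z‖ ^ α * ‖Complex.exp ((t:ℂ) * z) * f x - f x‖ := by
          rw [mul_assoc]; gcongr; linarith [hεf]
      _ ≤ ‖z‖ ^ α * (C * t ^ α) := by gcongr
      _ = C * (t ^ α * ‖z‖ ^ α) := by ring
      _ = C := by rw [htα]; ring
  · rintro ⟨C, hC⟩
    refine ⟨2 * C, fun t ht x => ?_⟩
    set z := q x with hz
    have hzre : z.re ≤ ω := hqre x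
    have hexp : ‖Complex.exp ((t:ℂ) * z) - 1‖ ≤ 2 * min 1 (t * ‖z‖) := by
      rcases le_total (t * ‖z‖) 1 with h | h
      · have := Complex.norm_exp_sub_one_le (x := (t:ℂ) * z) (by
          simpa [norm_mul, Complex.norm_real, abs_of_pos ht] using h)
        rw [min_eq_right h]
        simpa [norm_mul, Complex.norm_real, abs_of_pos ht] using this
      · rw [min_eq_left h]
        have h1 : ‖Complex.exp ((t:ℂ) * z)‖ ≤ 1 := by
          rw [Complex.norm_exp]
          apply Real.exp_le_one_iff.mpr
          have : ((t:ℂ) * z).re = t * z.re := by simp [Complex.mul_re]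
          rw [this]; nlinarith
        calc ‖Complex.exp ((t:ℂ) * z) - 1‖ ≤ ‖Complex.exp ((t:ℂ) * z)‖ + ‖(1:ℂ)‖ :=
              norm_sub_le _ _
          _ ≤ 2 * 1 := by rw [norm_one]; linarith
    have hmin : min 1 (t * ‖z‖) ≤ (t * ‖z‖) ^ α :=
      aux_min15 _ (by positivity) hα0 hα1.le
    rw [div_le_iff₀ (Real.rpow_pos_of_pos ht α)]
    calc ‖Complex.exp ((t:ℂ) * z) * f x - f x‖
        = ‖Complex.exp ((t:ℂ) * z) - 1‖ * ‖f x‖ := by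
          rw [← norm_mul]; ring_nf
      _ ≤ 2 * (t * ‖z‖) ^ α * ‖f x‖ := by
          gcongr
          calc ‖Complex.exp ((t:ℂ) * z) - 1‖ ≤ 2 * min 1 (t * ‖z‖) := hexp
            _ ≤ 2 * (t * ‖z‖) ^ α := by linarith
      _ = 2 * (‖z‖ ^ α * ‖f x‖) * t ^ α := by
          rw [Real.mul_rpow ht.le (norm_nonneg z)]; ring
      _ ≤ 2 * C * t ^ α := by
          gcongr
          exact hC x
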